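/- Let L, T > 0, let m be a real number, let S̄ : [0,L] → ℝ be bounded and measurable, and let (h,s) be a classical solution of the tear-film system with exponents (m, m+1) on [0,L]×[0,T]. Then the Dirichlet energy of h satisfies the identity: for every t ∈ [0,T], d/dt ∫₀^L ½ h_x(x,t)² dx = ∫₀^L h(x,t)ᵐ h_{xx}(x,t) (S̄(x) − s(x,t)) dx − ∫₀^L h(x,t)^{m+1} h_{xxx}(x,t)² dx. -/

import Mathlib

open Set MeasureTheory intervalIntegral Filter

open Set MeasureTheory
open Topology

/-- A classical solution of the tear-film system
`h_t = −(hⁿ h_{xxx})_x − hᵐ(S̄ − s)`,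
`s_t = s_{xx} + (h_x/h − h^{n−1} h_{xxx}) s_x + s(S̄ − s) h^{m−1}`
on `[0,L] × [0,T]`, with `h > 0`, `h` four times and `s` twice continuously
differentiable in `x`, both continuously differentiable in `t` (all partial
derivatives jointly continuous), subject to the boundary conditions
`h_x = h_{xxx} = s_x = 0` at `x = 0` and `x = L`. -/
structure TearFilmSolution (L T m n : ℝ) (Sbar : ℝ → ℝ) where
  h : ℝ → ℝ → ℝ
  s : ℝ → ℝ → ℝ
  hx : ℝ → ℝ → ℝ
  hxx : ℝ → ℝ → ℝ
  hxxx : ℝ → ℝ → ℝ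
  hxxxx : ℝ → ℝ → ℝ
  ht : ℝ → ℝ → ℝ
  sx : ℝ → ℝ → ℝ
  sxx : ℝ → ℝ → ℝ
  st : ℝ → ℝ → ℝ
  h_pos : ∀ x ∈ Icc 0 L, ∀ t ∈ Icc 0 T, 0 < h x t
  hasDeriv_hx : ∀ t ∈ Icc 0 T, ∀ x ∈ Icc 0 L,
    HasDerivWithinAt (fun x' => h x' t) (hx x t) (Icc 0 L) x
  hasDeriv_hxx : ∀ t ∈ Icc 0 T, ∀ x ∈ Icc 0 L,
    HasDerivWithinAt (fun x' => hx x' t) (hxx x t) (Icc 0 L) x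
  hasDeriv_hxxx : ∀ t ∈ Icc 0 T, ∀ x ∈ Icc 0 L,
    HasDerivWithinAt (fun x' => hxx x' t) (hxxx x t) (Icc 0 L) x
  hasDeriv_hxxxx : ∀ t ∈ Icc 0 T, ∀ x ∈ Icc 0 L,
    HasDerivWithinAt (fun x' => hxxx x' t) (hxxxx x t) (Icc 0 L) x
  hasDeriv_ht : ∀ x ∈ Icc 0 L, ∀ t ∈ Icc 0 T,
    HasDerivWithinAt (fun t' => h x t') (ht x t) (Icc 0 T) t
  hasDeriv_sx : ∀ t ∈ Icc 0 T, ∀ x ∈ Icc 0 L,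
    HasDerivWithinAt (fun x' => s x' t) (sx x t) (Icc 0 L) x
  hasDeriv_sxx : ∀ t ∈ Icc 0 T, ∀ x ∈ Icc 0 L,
    HasDerivWithinAt (fun x' => sx x' t) (sxx x t) (Icc 0 L) x
  hasDeriv_st : ∀ x ∈ Icc 0 L, ∀ t ∈ Icc 0 T,
    HasDerivWithinAt (fun t' => s x t') (st x t) (Icc 0 T) t
  cont_h : ContinuousOn (fun p : ℝ × ℝ => h p.1 p.2) (Icc 0 L ×ˢ Icc 0 T)
  cont_s : ContinuousOn (fun p : ℝ × ℝ => s p.1 p.2) (Icc 0 L ×ˢ Icc 0 T)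
  cont_hx : ContinuousOn (fun p : ℝ × ℝ => hx p.1 p.2) (Icc 0 L ×ˢ Icc 0 T)
  cont_hxx : ContinuousOn (fun p : ℝ × ℝ => hxx p.1 p.2) (Icc 0 L ×ˢ Icc 0 T)
  cont_hxxx : ContinuousOn (fun p : ℝ × ℝ => hxxx p.1 p.2) (Icc 0 L ×ˢ Icc 0 T)
  cont_hxxxx : ContinuousOn (fun p : ℝ × ℝ => hxxxx p.1 p.2) (Icc 0 L ×ˢ Icc 0 T)
  cont_ht : ContinuousOn (fun p : ℝ × ℝ => ht p.1 p.2) (Icc 0 L ×ˢ Icc 0 T)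
  cont_sx : ContinuousOn (fun p : ℝ × ℝ => sx p.1 p.2) (Icc 0 L ×ˢ Icc 0 T)
  cont_sxx : ContinuousOn (fun p : ℝ × ℝ => sxx p.1 p.2) (Icc 0 L ×ˢ Icc 0 T)
  cont_st : ContinuousOn (fun p : ℝ × ℝ => st p.1 p.2) (Icc 0 L ×ˢ Icc 0 T)
  pde_h : ∀ x ∈ Icc 0 L, ∀ t ∈ Icc 0 T,
    ht x t = -(n * h x t ^ (n - 1) * hx x t * hxxx x t + h x t ^ n * hxxxx x t)
      - h x t ^ m * (Sbar x - s x t)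
  pde_s : ∀ x ∈ Icc 0 L, ∀ t ∈ Icc 0 T,
    st x t = sxx x t + (hx x t / h x t - h x t ^ (n - 1) * hxxx x t) * sx x t
      + s x t * (Sbar x - s x t) * h x t ^ (m - 1)
  bc : ∀ t ∈ Icc 0 T,
    hx 0 t = 0 ∧ hx L t = 0 ∧ hxxx 0 t = 0 ∧ hxxx L t = 0 ∧ sx 0 t = 0 ∧ sx L t = 0


/-- Dirichlet-energy identity for the case `n = m + 1`:
`d/dt ∫₀^L ½ h_x² dx = ∫₀^L hᵐ h_{xx}(S̄ − s) dx − ∫₀^L h^{m+1} h_{xxx}² dx`. -/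
theorem dirichlet_energy_identity
    (L T m : ℝ) (hL : 0 < L) (hT : 0 < T)
    (Sbar : ℝ → ℝ) (hSmeas : Measurable Sbar)
    (hSbdd : ∃ C : ℝ, ∀ x ∈ Icc (0:ℝ) L, |Sbar x| ≤ C)
    (sol : TearFilmSolution L T m (m + 1) Sbar) :
    ∀ t ∈ Icc (0:ℝ) T,
      HasDerivWithinAt (fun t' => ∫ x in (0:ℝ)..L, (1 / 2) * (sol.hx x t') ^ 2)
        ((∫ x in (0:ℝ)..L, sol.h x t ^ m * sol.hxx x t * (Sbar x - sol.s x t))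
          - ∫ x in (0:ℝ)..L, sol.h x t ^ (m + 1) * (sol.hxxx x t) ^ 2)
        (Icc (0:ℝ) T) t := by
  intro t htm
  obtain ⟨h, s, hx, hxx, hxxx, hxxxx, ht, sx, sxx, st, hpos, Dhx, Dhxx, Dhxxx, Dhxxxx, Dht, Dsx, Dsxx, Dst, Ch, Cs, Chx, Chxx, Chxxx, Chxxxx, Cht, Csx, Csxx, Cst, pdeh, pdes, bc⟩ := sol
  dsimp only
  -- basic facts
  have huIcc : Set.uIcc (0:ℝ) L = Icc 0 L := uIcc_of_le hL.le
  have hIoc : Set.uIoc (0:ℝ) L = Ioc 0 L := uIoc_of_le hL.le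
  have hK : IsCompact (Icc (0:ℝ) L ×ˢ Icc (0:ℝ) T) := isCompact_Icc.prod isCompact_Icc
  -- slice continuity
  have sliceX : ∀ {f : ℝ → ℝ → ℝ}, ContinuousOn (fun p : ℝ × ℝ => f p.1 p.2) (Icc 0 L ×ˢ Icc 0 T) →
      ∀ {τ : ℝ}, τ ∈ Icc (0:ℝ) T → ContinuousOn (fun x => f x τ) (Icc (0:ℝ) L) := by
    intro f hf τ hτ
    exact hf.comp ((continuous_id.prodMk continuous_const).continuousOn)
      (fun x hxm => Set.mk_mem_prod hxm hτ)
  have sliceT : ∀ {f : ℝ → ℝ → ℝ}, ContinuousOn (fun p : ℝ × ℝ => f p.1 p.2) (Icc 0 L ×ˢ Icc 0 T) →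
      ∀ {x : ℝ}, x ∈ Icc (0:ℝ) L → ContinuousOn (fun τ => f x τ) (Icc (0:ℝ) T) := by
    intro f hf x hxm
    exact hf.comp ((continuous_const.prodMk continuous_id).continuousOn)
      (fun τ hτ => Set.mk_mem_prod hxm hτ)
  -- FTC helper
  have ftc : ∀ (g g' : ℝ → ℝ), (∀ x ∈ Icc (0:ℝ) L, HasDerivWithinAt g (g' x) (Icc (0:ℝ) L) x) →
      ContinuousOn g' (Icc (0:ℝ) L) → ∫ x in (0:ℝ)..L, g' x = g L - g 0 := by
    intro g g' hg hg'
    apply intervalIntegral.integral_eq_sub_of_hasDeriv_right_of_le hL.le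
    · exact fun x hxm => (hg x hxm).continuousWithinAt
    · intro x hxm
      exact ((hg x (Ioo_subset_Icc_self hxm)).hasDerivAt
        (Icc_mem_nhds hxm.1 hxm.2)).hasDerivWithinAt
    · exact (hg'.mono (fun y hy => by rwa [huIcc] at hy)).intervalIntegrable
  -- bounds
  obtain ⟨C1, hC1⟩ := hK.exists_bound_of_continuousOn Cht
  have hC1' : ∀ x ∈ Icc (0:ℝ) L, ∀ τ ∈ Icc (0:ℝ) T, |ht x τ| ≤ C1 := by
    intro x hxm τ hτ
    simpa using hC1 (x, τ) (Set.mk_mem_prod hxm hτ)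
  have hC1nn : (0:ℝ) ≤ C1 :=
    le_trans (abs_nonneg _) (hC1' 0 ⟨le_refl 0, hL.le⟩ 0 ⟨le_refl 0, hT.le⟩)
  obtain ⟨C2, hC2⟩ := hK.exists_bound_of_continuousOn Chxx
  have hC2' : ∀ x ∈ Icc (0:ℝ) L, ∀ τ ∈ Icc (0:ℝ) T, |hxx x τ| ≤ C2 := by
    intro x hxm τ hτ
    simpa using hC2 (x, τ) (Set.mk_mem_prod hxm hτ)
  have hC2nn : (0:ℝ) ≤ C2 :=
    le_trans (abs_nonneg _) (hC2' 0 ⟨le_refl 0, hL.le⟩ 0 ⟨le_refl 0, hT.le⟩)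
  -- MVT in time
  have hMVT : ∀ x ∈ Icc (0:ℝ) L, ∀ t' ∈ Icc (0:ℝ) T, |h x t' - h x t| ≤ C1 * |t' - t| := by
    intro x hxm t' ht'
    have := (convex_Icc (0:ℝ) T).norm_image_sub_le_of_norm_hasDerivWithin_le
      (fun τ hτ => Dht x hxm τ hτ) (fun τ hτ => by simpa using hC1' x hxm τ hτ) htm ht'
    simpa using this
  -- Lemma A : difference identity
  have lemA : ∀ t' ∈ Icc (0:ℝ) T,
      (∫ x in (0:ℝ)..L, (1/2 : ℝ) * (hx x t')^2) - (∫ x in (0:ℝ)..L, (1/2 : ℝ) * (hx x t)^2)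
      = ∫ x in (0:ℝ)..L, -(1/2 * (hxx x t' + hxx x t) * (h x t' - h x t)) := by
    intro t' ht'
    have c1 : ContinuousOn (fun x => (1/2 : ℝ) * (hx x t')^2) (Icc 0 L) :=
      continuousOn_const.mul ((sliceX Chx ht').pow 2)
    have c2 : ContinuousOn (fun x => (1/2 : ℝ) * (hx x t)^2) (Icc 0 L) :=
      continuousOn_const.mul ((sliceX Chx htm).pow 2)
    have c3 : ContinuousOn (fun x => (1/2 : ℝ) * (hxx x t' + hxx x t) * (h x t' - h x t)) (Icc 0 L) :=
      (continuousOn_const.mul ((sliceX Chxx ht').add (sliceX Chxx htm))).mul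
        ((sliceX Ch ht').sub (sliceX Ch htm))
    have i1 : IntervalIntegrable (fun x => (1/2 : ℝ) * (hx x t')^2) volume 0 L :=
      (c1.mono (fun y hy => by rwa [huIcc] at hy)).intervalIntegrable
    have i2 : IntervalIntegrable (fun x => (1/2 : ℝ) * (hx x t)^2) volume 0 L :=
      (c2.mono (fun y hy => by rwa [huIcc] at hy)).intervalIntegrable
    have i3 : IntervalIntegrable (fun x => (1/2 : ℝ) * (hxx x t' + hxx x t) * (h x t' - h x t)) volume 0 L :=
      (c3.mono (fun y hy => by rwa [huIcc] at hy)).intervalIntegrable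
    have hder : ∀ x ∈ Icc (0:ℝ) L,
        HasDerivWithinAt (fun x' => (1/2 : ℝ) * (hx x' t' + hx x' t) * (h x' t' - h x' t))
          ((1/2 : ℝ) * (hx x t')^2 - (1/2 : ℝ) * (hx x t)^2
            + (1/2 : ℝ) * (hxx x t' + hxx x t) * (h x t' - h x t)) (Icc (0:ℝ) L) x := by
      intro x hxm
      have d1 : HasDerivWithinAt (fun x' => hx x' t' + hx x' t) (hxx x t' + hxx x t) (Icc (0:ℝ) L) x :=
        (Dhxx t' ht' x hxm).add (Dhxx t htm x hxm)
      have d2 : HasDerivWithinAt (fun x' => h x' t' - h x' t) (hx x t' - hx x t) (Icc (0:ℝ) L) x :=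
        (Dhx t' ht' x hxm).sub (Dhx t htm x hxm)
      have := (d1.const_mul (1/2 : ℝ)).mul d2
      refine this.congr_deriv ?_
      ring
    have hcd : ContinuousOn (fun x => (1/2 : ℝ) * (hx x t')^2 - (1/2 : ℝ) * (hx x t)^2
        + (1/2 : ℝ) * (hxx x t' + hxx x t) * (h x t' - h x t)) (Icc (0:ℝ) L) :=
      (c1.sub c2).add c3
    have hF := ftc _ _ hder hcd
    have hb1 := (bc t' ht').1
    have hb2 := (bc t' ht').2.1
    have hb3 := (bc t htm).1
    have hb4 := (bc t htm).2.1
    simp only [hb1, hb2, hb3, hb4] at hF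
    rw [intervalIntegral.integral_add (i1.sub i2) i3, intervalIntegral.integral_sub i1 i2] at hF
    rw [intervalIntegral.integral_neg]
    norm_num at hF ⊢
    linarith
  -- the derivative, with value ∫ -(hxx * ht)
  have hmain : HasDerivWithinAt (fun t' => ∫ x in (0:ℝ)..L, (1/2 : ℝ) * (hx x t')^2)
      (∫ x in (0:ℝ)..L, -(hxx x t * ht x t)) (Icc (0:ℝ) T) t := by
    rw [hasDerivWithinAt_iff_tendsto_slope]
    have htends : Tendsto
        (fun t' => ∫ x in (0:ℝ)..L, (t' - t)⁻¹ * -(1/2 * (hxx x t' + hxx x t) * (h x t' - h x t)))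
        (𝓝[Icc (0:ℝ) T \ {t}] t) (𝓝 (∫ x in (0:ℝ)..L, -(hxx x t * ht x t))) := by
      apply intervalIntegral.tendsto_integral_filter_of_dominated_convergence (fun _ => C2 * C1)
      · filter_upwards [self_mem_nhdsWithin] with t' ht'
        obtain ⟨ht'm, -⟩ := ht'
        have : ContinuousOn
            (fun x => (t' - t)⁻¹ * -(1/2 * (hxx x t' + hxx x t) * (h x t' - h x t))) (Icc (0:ℝ) L) :=
          continuousOn_const.mul ((continuousOn_const.mul
            ((sliceX Chxx ht'm).add (sliceX Chxx htm))).mul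
            ((sliceX Ch ht'm).sub (sliceX Ch htm))).neg
        rw [hIoc]
        exact (this.mono Ioc_subset_Icc_self).aestronglyMeasurable measurableSet_Ioc
      · filter_upwards [self_mem_nhdsWithin] with t' ht'
        obtain ⟨ht'm, hne⟩ := ht'
        have hne' : t' - t ≠ 0 := sub_ne_zero.2 (by simpa using hne)
        refine ae_of_all _ fun x hxm => ?_
        rw [hIoc] at hxm
        have hxm' : x ∈ Icc (0:ℝ) L := Ioc_subset_Icc_self hxm
        have b1 : |hxx x t'| ≤ C2 := hC2' x hxm' t' ht'm
        have b2 : |hxx x t| ≤ C2 := hC2' x hxm' t htm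
        have b3 : |h x t' - h x t| ≤ C1 * |t' - t| := hMVT x hxm' t' ht'm
        have habs : |hxx x t' + hxx x t| ≤ 2 * C2 := (abs_add_le _ _).trans (by linarith)
        have inner : |1/2 * (hxx x t' + hxx x t) * (h x t' - h x t)| ≤ C2 * C1 * |t' - t| := by
          rw [abs_mul, abs_mul]
          have := mul_le_mul habs b3 (abs_nonneg _) (by positivity)
          have h12 : |(1/2 : ℝ)| = 1/2 := by norm_num
          rw [h12]
          nlinarith [abs_nonneg (h x t' - h x t)]
        calc ‖(t' - t)⁻¹ * -(1/2 * (hxx x t' + hxx x t) * (h x t' - h x t))‖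
            = |t' - t|⁻¹ * |1/2 * (hxx x t' + hxx x t) * (h x t' - h x t)| := by
              rw [Real.norm_eq_abs, abs_mul, abs_inv, abs_neg]
          _ ≤ |t' - t|⁻¹ * (C2 * C1 * |t' - t|) :=
              mul_le_mul_of_nonneg_left inner (inv_nonneg.2 (abs_nonneg _))
          _ = C2 * C1 := by
              field_simp
      · exact intervalIntegrable_const
      · refine ae_of_all _ fun x hxm => ?_
        rw [hIoc] at hxm
        have hxm' : x ∈ Icc (0:ℝ) L := Ioc_subset_Icc_self hxm
        have tg1 : Tendsto (fun t' => hxx x t') (𝓝[Icc (0:ℝ) T \ {t}] t) (𝓝 (hxx x t)) :=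
          ((sliceT Chxx hxm') t htm).mono_left (nhdsWithin_mono _ diff_subset)
        have tg2 : Tendsto (slope (fun τ => h x τ) t) (𝓝[Icc (0:ℝ) T \ {t}] t) (𝓝 (ht x t)) :=
          hasDerivWithinAt_iff_tendsto_slope.mp (Dht x hxm' t htm)
        have key : Tendsto (fun t' => (-(1/2) : ℝ) * (hxx x t' + hxx x t) * slope (fun τ => h x τ) t t')
            (𝓝[Icc (0:ℝ) T \ {t}] t) (𝓝 ((-(1/2) : ℝ) * (hxx x t + hxx x t) * ht x t)) :=
          ((tg1.add tendsto_const_nhds).const_mul _).mul tg2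
        have hval : -(hxx x t * ht x t) = (-(1/2) : ℝ) * (hxx x t + hxx x t) * ht x t := by ring
        rw [hval]
        refine key.congr fun t' => ?_
        rw [slope_def_field]
        ring
    refine htends.congr' ?_
    filter_upwards [self_mem_nhdsWithin] with t' ht'
    obtain ⟨ht'm, hne⟩ := ht'
    calc (∫ x in (0:ℝ)..L, (t' - t)⁻¹ * -(1/2 * (hxx x t' + hxx x t) * (h x t' - h x t)))
        = (t' - t)⁻¹ * ∫ x in (0:ℝ)..L, -(1/2 * (hxx x t' + hxx x t) * (h x t' - h x t)) :=
          intervalIntegral.integral_const_mul _ _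
      _ = (t' - t)⁻¹ * ((∫ x in (0:ℝ)..L, (1/2 : ℝ) * (hx x t')^2)
            - ∫ x in (0:ℝ)..L, (1/2 : ℝ) * (hx x t)^2) := by rw [← lemA t' ht'm]
      _ = slope (fun t' => ∫ x in (0:ℝ)..L, (1/2 : ℝ) * (hx x t')^2) t t' := by
          rw [slope_def_field]
          exact (div_eq_inv_mul _ _).symm
  -- identify the derivative with the claimed expression
  have hm1 : m + 1 - 1 = m := by ring
  have eqc : (∫ x in (0:ℝ)..L, -(hxx x t * ht x t))
      = (∫ x in (0:ℝ)..L, h x t ^ m * hxx x t * (Sbar x - s x t))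
        - ∫ x in (0:ℝ)..L, h x t ^ (m+1) * (hxxx x t)^2 := by
    have e1 : ∀ x ∈ Icc (0:ℝ) L, -(hxx x t * ht x t)
        = hxx x t * ((m+1) * h x t ^ m * hx x t * hxxx x t + h x t ^ (m+1) * hxxxx x t)
          + h x t ^ m * hxx x t * (Sbar x - s x t) := by
      intro x hxm
      rw [pdeh x hxm t htm, hm1]
      ring
    have hco : ContinuousOn (fun x => h x t ^ m) (Icc (0:ℝ) L) :=
      (sliceX Ch htm).rpow_const (fun x hxm => Or.inl (hpos x hxm t htm).ne')
    have hco1 : ContinuousOn (fun x => h x t ^ (m+1)) (Icc (0:ℝ) L) :=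
      (sliceX Ch htm).rpow_const (fun x hxm => Or.inl (hpos x hxm t htm).ne')
    have cY : ContinuousOn
        (fun x => hxx x t * ((m+1) * h x t ^ m * hx x t * hxxx x t + h x t ^ (m+1) * hxxxx x t))
        (Icc (0:ℝ) L) :=
      (sliceX Chxx htm).mul
        ((((continuousOn_const.mul hco).mul (sliceX Chx htm)).mul (sliceX Chxxx htm)).add
          (hco1.mul (sliceX Chxxxx htm)))
    have iY : IntervalIntegrable
        (fun x => hxx x t * ((m+1) * h x t ^ m * hx x t * hxxx x t + h x t ^ (m+1) * hxxxx x t))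
        volume 0 L :=
      (cY.mono (fun y hy => by rwa [huIcc] at hy)).intervalIntegrable
    have cX : ContinuousOn (fun x => h x t ^ (m+1) * (hxxx x t)^2) (Icc (0:ℝ) L) :=
      hco1.mul ((sliceX Chxxx htm).pow 2)
    have iX : IntervalIntegrable (fun x => h x t ^ (m+1) * (hxxx x t)^2) volume 0 L :=
      (cX.mono (fun y hy => by rwa [huIcc] at hy)).intervalIntegrable
    -- integrability of the Sbar term
    obtain ⟨C0, hC0⟩ := hSbdd
    obtain ⟨C3, hC3⟩ := isCompact_Icc.exists_bound_of_continuousOn (hco.mul (sliceX Chxx htm))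
    obtain ⟨C5, hC5⟩ := isCompact_Icc.exists_bound_of_continuousOn (sliceX Cs htm)
    have iZ : IntervalIntegrable (fun x => h x t ^ m * hxx x t * (Sbar x - s x t)) volume 0 L := by
      rw [intervalIntegrable_iff, hIoc]
      have meas : AEStronglyMeasurable (fun x => h x t ^ m * hxx x t * (Sbar x - s x t))
          (volume.restrict (Ioc (0:ℝ) L)) := by
        refine AEStronglyMeasurable.mul ?_ (AEStronglyMeasurable.sub ?_ ?_)
        · exact (((hco.mul (sliceX Chxx htm)).mono Ioc_subset_Icc_self).aestronglyMeasurable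
            measurableSet_Ioc)
        · exact hSmeas.aestronglyMeasurable
        · exact (((sliceX Cs htm).mono Ioc_subset_Icc_self).aestronglyMeasurable measurableSet_Ioc)
      refine Integrable.mono' (integrable_const (|C3| * (C0 + |C5|))) meas ?_
      rw [ae_restrict_iff' measurableSet_Ioc]
      refine ae_of_all _ fun x hxm => ?_
      have hxm' : x ∈ Icc (0:ℝ) L := Ioc_subset_Icc_self hxm
      have b1 : |h x t ^ m * hxx x t| ≤ |C3| := by
        have := hC3 x hxm'
        rw [Real.norm_eq_abs] at this
        exact this.trans (le_abs_self _)
      have b2 : |s x t| ≤ |C5| := by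
        have := hC5 x hxm'
        rw [Real.norm_eq_abs] at this
        exact this.trans (le_abs_self _)
      have b3 : |Sbar x - s x t| ≤ C0 + |C5| :=
        (abs_sub _ _).trans (add_le_add (hC0 x hxm') b2)
      calc ‖h x t ^ m * hxx x t * (Sbar x - s x t)‖
          = |h x t ^ m * hxx x t| * |Sbar x - s x t| := by rw [Real.norm_eq_abs, abs_mul]
        _ ≤ |C3| * (C0 + |C5|) :=
            mul_le_mul b1 b3 (abs_nonneg _) (abs_nonneg _)
    -- rewrite integrand using the PDE
    rw [intervalIntegral.integral_congr (g := fun x =>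
      hxx x t * ((m+1) * h x t ^ m * hx x t * hxxx x t + h x t ^ (m+1) * hxxxx x t)
        + h x t ^ m * hxx x t * (Sbar x - s x t))
      (fun x hxm => e1 x (by rwa [huIcc] at hxm))]
    rw [intervalIntegral.integral_add iY iZ]
    -- FTC for the third-derivative term
    have hder2 : ∀ x ∈ Icc (0:ℝ) L,
        HasDerivWithinAt (fun x' => hxx x' t * h x' t ^ (m+1) * hxxx x' t)
          (h x t ^ (m+1) * (hxxx x t)^2
            + hxx x t * ((m+1) * h x t ^ m * hx x t * hxxx x t + h x t ^ (m+1) * hxxxx x t))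
          (Icc (0:ℝ) L) x := by
      intro x hxm
      have dh : HasDerivWithinAt (fun x' => h x' t) (hx x t) (Icc (0:ℝ) L) x := Dhx t htm x hxm
      have dpow : HasDerivWithinAt (fun x' => h x' t ^ (m+1))
          (hx x t * (m+1) * h x t ^ (m+1-1)) (Icc (0:ℝ) L) x :=
        dh.rpow_const (Or.inl (hpos x hxm t htm).ne')
      have := ((Dhxxx t htm x hxm).mul dpow).mul (Dhxxxx t htm x hxm)
      refine this.congr_deriv ?_
      simp only [Pi.mul_apply]
      rw [hm1]
      ring
    have cd2 : ContinuousOn (fun x => h x t ^ (m+1) * (hxxx x t)^2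
        + hxx x t * ((m+1) * h x t ^ m * hx x t * hxxx x t + h x t ^ (m+1) * hxxxx x t))
        (Icc (0:ℝ) L) := cX.add cY
    have hF2 := ftc _ _ hder2 cd2
    have hb1 := (bc t htm).2.2.1
    have hb2 := (bc t htm).2.2.2.1
    simp only [hb1, hb2, mul_zero, sub_zero] at hF2
    rw [intervalIntegral.integral_add iX iY] at hF2
    linarith
  rw [← eqc]
  exact hmain
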